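/- Let (A, R) be a finite SETAF. A function ℓ : A → {0, ½, 1} satisfies the Gödel equational system Eq_G^S (ℓ(a) = min over attacker sets Sᵢ of a of max over b ∈ Sᵢ of (1 − ℓ(b)), with the convention that the outer min over an empty family is 1) if and only if ℓ is a complete labelling of the SETAF. -/

import Mathlib

open Set Finset

/-- The attacker sets of argument `a` in the SETAF with attack relation `R`. -/
def attackers {A : Type*} [DecidableEq A] (R : Finset (Finset A × A)) (a : A) :
    Finset (Finset A) :=
  (R.filter fun p => p.2 = a).image Prod.fst

private lemma fold_max_mem_tri {A : Type*} (s : Finset A) (f : A → ℝ) (b : ℝ)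
    (hb : b = 0 ∨ b = 1/2 ∨ b = 1) (hf : ∀ x ∈ s, f x = 0 ∨ f x = 1/2 ∨ f x = 1) :
    s.fold max b f = 0 ∨ s.fold max b f = 1/2 ∨ s.fold max b f = 1 := by
  classical
  induction s using Finset.induction with
  | empty => simp only [Finset.fold_empty]; exact hb
  | insert _ _ h ih =>
    rw [Finset.fold_insert h]
    rcases max_choice (f _) _ with h1 | h1 <;> rw [h1]
    · exact hf _ (Finset.mem_insert_self _ _)
    · exact ih (fun x hx => hf x (Finset.mem_insert_of_mem hx))

private lemma fold_min_mem_tri {A : Type*} (s : Finset A) (f : A → ℝ) (b : ℝ)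
    (hb : b = 0 ∨ b = 1/2 ∨ b = 1) (hf : ∀ x ∈ s, f x = 0 ∨ f x = 1/2 ∨ f x = 1) :
    s.fold min b f = 0 ∨ s.fold min b f = 1/2 ∨ s.fold min b f = 1 := by
  classical
  induction s using Finset.induction with
  | empty => simp only [Finset.fold_empty]; exact hb
  | insert _ _ h ih =>
    rw [Finset.fold_insert h]
    rcases min_choice (f _) _ with h1 | h1 <;> rw [h1]
    · exact hf _ (Finset.mem_insert_self _ _)
    · exact ih (fun x hx => hf x (Finset.mem_insert_of_mem hx))

private lemma tri_eq {x y : ℝ} (hx : x = 0 ∨ x = 1/2 ∨ x = 1)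
    (hy : y = 0 ∨ y = 1/2 ∨ y = 1)
    (h1 : x = 1 ↔ y = 1) (h0 : x = 0 ↔ y = 0) : x = y := by
  rcases hx with hx | hx | hx <;> rcases hy with hy | hy | hy <;>
    subst hx <;> subst hy <;> first | rfl | (exfalso; revert h0 h1; norm_num)

/-- For a finite SETAF and `ℓ : A → {0, 1/2, 1}`, `ℓ` satisfies the Gödel
equational system `Eq_G^S` — `ℓ a = min over attacker sets S of (max over b ∈ S of (1 - ℓ b))`,
the min over the empty family being `1` — iff `ℓ` is a complete labelling. -/
theorem stmt_10 {A : Type*} [Fintype A] [DecidableEq A]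
    (R : Finset (Finset A × A)) (hR : ∀ p ∈ R, p.1.Nonempty)
    (ℓ : A → ℝ) (hℓ : ∀ a, ℓ a = 0 ∨ ℓ a = 1/2 ∨ ℓ a = 1) :
    ((∀ a, ℓ a = (attackers R a).fold min 1 (fun S => S.fold max 0 (fun b => 1 - ℓ b))) ↔
      (∀ a, (ℓ a = 1 ↔ ∀ S ∈ attackers R a, ∃ b ∈ S, ℓ b = 0) ∧
            (ℓ a = 0 ↔ ∃ S ∈ attackers R a, ∀ b ∈ S, ℓ b = 1))) := by
  classical
  set g : Finset A → ℝ := fun S => S.fold max 0 (fun b => 1 - ℓ b) with hgdef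
  set F : A → ℝ := fun a => (attackers R a).fold min 1 g with hFdef
  have hl0 : ∀ b, 0 ≤ ℓ b := fun b => by rcases hℓ b with h | h | h <;> rw [h] <;> norm_num
  have hl1 : ∀ b, ℓ b ≤ 1 := fun b => by rcases hℓ b with h | h | h <;> rw [h] <;> norm_num
  have hg0 : ∀ S, 0 ≤ g S := fun S => (Finset.le_fold_max _).mpr (Or.inl le_rfl)
  have hg1 : ∀ S, g S ≤ 1 := fun S =>
    (Finset.fold_max_le _).mpr ⟨by norm_num, fun b _ => by have := hl0 b; linarith⟩
  have hF0 : ∀ a, 0 ≤ F a := fun a =>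
    (Finset.le_fold_min _).mpr ⟨by norm_num, fun S _ => hg0 S⟩
  have hF1 : ∀ a, F a ≤ 1 := fun a => (Finset.fold_min_le _).mpr (Or.inl le_rfl)
  have hgone : ∀ S : Finset A, g S = 1 ↔ ∃ b ∈ S, ℓ b = 0 := by
    intro S
    constructor
    · intro h
      rcases (Finset.le_fold_max _).mp h.ge with h' | ⟨b, hb, hb'⟩
      · norm_num at h'
      · exact ⟨b, hb, by have := hl0 b; linarith⟩
    · rintro ⟨b, hb, hb'⟩
      have : (1:ℝ) ≤ g S := (Finset.le_fold_max _).mpr (Or.inr ⟨b, hb, by rw [hb']; norm_num⟩)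
      linarith [hg1 S]
  have hgzero : ∀ S : Finset A, g S = 0 ↔ ∀ b ∈ S, ℓ b = 1 := by
    intro S
    constructor
    · intro h b hb
      have := ((Finset.fold_max_le _).mp h.le).2 b hb
      have := hl1 b; linarith
    · intro h
      have : g S ≤ 0 := (Finset.fold_max_le _).mpr ⟨le_rfl, fun b hb => by rw [h b hb]; norm_num⟩
      linarith [hg0 S]
  have hFone : ∀ a, F a = 1 ↔ ∀ S ∈ attackers R a, ∃ b ∈ S, ℓ b = 0 := by
    intro a
    constructor
    · intro h S hS
      have := ((Finset.le_fold_min _).mp h.ge).2 S hS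
      exact (hgone S).mp (le_antisymm (hg1 S) this)
    · intro h
      have : (1:ℝ) ≤ F a := (Finset.le_fold_min _).mpr
        ⟨le_rfl, fun S hS => ((hgone S).mpr (h S hS)).ge⟩
      linarith [hF1 a]
  have hFzero : ∀ a, F a = 0 ↔ ∃ S ∈ attackers R a, ∀ b ∈ S, ℓ b = 1 := by
    intro a
    constructor
    · intro h
      rcases (Finset.fold_min_le _).mp h.le with h' | ⟨S, hS, hS'⟩
      · norm_num at h'
      · exact ⟨S, hS, (hgzero S).mp (le_antisymm hS' (hg0 S))⟩
    · rintro ⟨S, hS, hS'⟩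
      have : F a ≤ 0 := (Finset.fold_min_le _).mpr (Or.inr ⟨S, hS, ((hgzero S).mpr hS').le⟩)
      linarith [hF0 a]
  have hFmem : ∀ a, F a = 0 ∨ F a = 1/2 ∨ F a = 1 := by
    intro a
    exact fold_min_mem_tri _ _ _ (by norm_num) (fun S _ =>
      fold_max_mem_tri _ _ _ (by norm_num) (fun b _ => by
        rcases hℓ b with h | h | h <;> rw [h] <;> norm_num))
  constructor
  · intro h a
    refine ⟨?_, ?_⟩
    · rw [show ℓ a = F a from h a]; exact hFone a
    · rw [show ℓ a = F a from h a]; exact hFzero a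
  · intro h a
    exact tri_eq (hℓ a) (hFmem a)
      ((h a).1.trans (hFone a).symm) ((h a).2.trans (hFzero a).symm)
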